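/- For every ℝ-linear operator H on ℝ[X] there exists exactly one ℝ-linear operator A on ℝ[X] such that A(1) = 0 and A∘F − F∘A = H. -/

import Mathlib

open Polynomial

/-- The operator of multiplication by `X` on `ℝ[X]`. -/
noncomputable def F : Module.End ℝ (Polynomial ℝ) := LinearMap.mulLeft ℝ (X : Polynomial ℝ)

/-- For every linear operator `H` on `ℝ[X]` there is exactly one linear operator `A`
with `A 1 = 0` and `A∘F − F∘A = H`. -/
theorem stmt8 (H : Module.End ℝ (Polynomial ℝ)) :
    ∃! A : Module.End ℝ (Polynomial ℝ), A 1 = 0 ∧ A * F - F * A = H := by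
  classical
  set B := Polynomial.basisMonomials ℝ with hB
  have hBn : ∀ n : ℕ, B n = X ^ n := by
    intro n
    rw [hB]
    rw [show ((Polynomial.basisMonomials ℝ) n : Polynomial ℝ)
        = (fun s => monomial s (1:ℝ)) n from congrFun (Polynomial.coe_basisMonomials ℝ) n]
    simp [X_pow_eq_monomial]
  -- the prescribed values
  let g : ℕ → Polynomial ℝ := fun n => Nat.rec 0 (fun n p => X * p + H (X ^ n)) n
  have hg0 : g 0 = 0 := rfl
  have hgs : ∀ n, g (n + 1) = X * g n + H (X ^ n) := fun n => rfl
  let A : Module.End ℝ (Polynomial ℝ) := B.constr ℝ g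
  have hA : ∀ n, A (X ^ n) = g n := by
    intro n
    rw [← hBn n]
    exact B.constr_basis ℝ g n
  have hF : ∀ (T : Module.End ℝ (Polynomial ℝ)) (n : ℕ),
      (T * F) (X ^ n) = T (X ^ (n + 1)) := by
    intro T n
    simp [F, Module.End.mul_apply, LinearMap.mulLeft_apply, pow_succ, mul_comm]
  have hA1 : A 1 = 0 := by
    have := hA 0
    simpa [hg0] using this
  have hAc : A * F - F * A = H := by
    apply B.ext
    intro n
    rw [hBn n]
    simp only [LinearMap.sub_apply, hF A n, hA, hA (n+1), hgs n,
      Module.End.mul_apply]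
    simp [F, LinearMap.mulLeft_apply, hA]
  refine ⟨A, ⟨hA1, hAc⟩, ?_⟩
  rintro A' ⟨h1, h2⟩
  apply B.ext
  intro n
  rw [hBn n]
  rw [hA n]
  induction n with
  | zero => simpa [hg0] using h1
  | succ n ih =>
    have := congrArg (fun T : Module.End ℝ (Polynomial ℝ) => T (X ^ n)) h2
    simp only [LinearMap.sub_apply, hF A' n, Module.End.mul_apply] at this
    have hFa : F (A' (X ^ n)) = X * A' (X ^ n) := by simp [F]
    rw [hFa] at this
    rw [hgs n, ← ih]
    rw [sub_eq_iff_eq_add.mp this]; ring
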